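/- arXiv:1707.07801 — 2 statements merged into one kernel-verified Lean document; each statement's English description precedes it below -/
import Mathlib

section
/- Static condition implies increasing: let F : Atom → Set Msg → L be any function, p a protocol with variables, and T a set of messages with pairwise disjoint variables among distinct elements such that for every step (R⁻, r⁺) ∈ p, r⁺ ∈ T and R⁻ ⊆ T; let W be the witness function for T, extended to a finite set M of ground messages by W(α, M) := ⊓_{t ∈ M} W(α, t). If for every step (R⁻, r⁺) ∈ p, every substitution σ and every atom α we have ⊓ { G_F(α, m', σ') : m' ∈ T, σ' a substitution with m'σ' = r⁺σ' } ⊒ ⌜α⌝ ⊓ ⊓_{m ∈ R⁻} G_F(α, m, σ), then for every step (R⁻, r⁺) ∈ p, every substitution σ and every atom α: W(α, r⁺σ) ⊒ ⌜α⌝ ⊓ W(α, R⁻σ), i.e. the ground instantiation of p is W-increasing. -/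
/-- Messages: atoms, pairs, and encryptions (`enc m k` encrypts `m` with key `k`). -/
inductive Msg (Atom : Type) : Type
  | atom : Atom → Msg Atom
  | pair : Msg Atom → Msg Atom → Msg Atom
  | enc  : Msg Atom → Atom → Msg Atom

namespace Msg

/-- The set `𝒜(m)` of atoms occurring in a message. -/
def atoms {Atom : Type} : Msg Atom → Set Atom
  | atom a => {a}
  | pair m₁ m₂ => m₁.atoms ∪ m₂.atoms
  | enc m k => m.atoms ∪ {k}

end Msg

/-- The set `𝒜(M)` of atoms occurring in a set of messages. -/
def atomsOf {Atom : Type} (M : Set (Msg Atom)) : Set Atom := ⋃ m ∈ M, m.atoms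

/-- Dolev–Yao deduction `M ⊢ m`, relative to a set of keys and a key-inverse map. -/
inductive Deduces {Atom : Type} (Key : Set Atom) (inv : Atom → Atom)
    (M : Set (Msg Atom)) : Msg Atom → Prop
  | ax {m} (h : m ∈ M) : Deduces Key inv M m
  | pair {m₁ m₂} (h₁ : Deduces Key inv M m₁) (h₂ : Deduces Key inv M m₂) :
      Deduces Key inv M (Msg.pair m₁ m₂)
  | fst {m₁ m₂} (h : Deduces Key inv M (Msg.pair m₁ m₂)) : Deduces Key inv M m₁
  | snd {m₁ m₂} (h : Deduces Key inv M (Msg.pair m₁ m₂)) : Deduces Key inv M m₂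
  | enc {m k} (hk : k ∈ Key) (h : Deduces Key inv M m)
      (hkey : Deduces Key inv M (Msg.atom k)) : Deduces Key inv M (Msg.enc m k)
  | dec {m k} (hk : k ∈ Key) (h : Deduces Key inv M (Msg.enc m k))
      (hkey : Deduces Key inv M (Msg.atom (inv k))) : Deduces Key inv M m

/-- A well-formed function on atoms and sets of messages. -/
def WellFormed {Atom L : Type} [CompleteLattice L]
    (F : Atom → Set (Msg Atom) → L) : Prop :=
  (∀ α : Atom, F α {Msg.atom α} = ⊥) ∧
  (∀ (α : Atom) (M : Set (Msg Atom)), α ∉ atomsOf M → F α M = ⊤) ∧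
  (∀ (α : Atom) (M₁ M₂ : Set (Msg Atom)), F α (M₁ ∪ M₂) = F α M₁ ⊓ F α M₂)

/-- A full-invariant-by-intruder function: deduction cannot lower the level of an
atom unless the intruder is authorized to know it (`⌜K(I)⌝ ⊒ ⌜α⌝`). -/
def FullInvariant {Atom L : Type} [CompleteLattice L] (Key : Set Atom) (inv : Atom → Atom)
    (lvl : Atom → L) (KI : L) (F : Atom → Set (Msg Atom) → L) : Prop :=
  ∀ (M : Set (Msg Atom)) (m : Msg Atom), Deduces Key inv M m →
    ∀ α ∈ m.atoms, F α M ≤ F α {m} ∨ lvl α ≤ KI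

/-- A safe function: well-formed and full-invariant-by-intruder. -/
def Safe {Atom L : Type} [CompleteLattice L] (Key : Set Atom) (inv : Atom → Atom)
    (lvl : Atom → L) (KI : L) (F : Atom → Set (Msg Atom) → L) : Prop :=
  WellFormed F ∧ FullInvariant Key inv lvl KI F

/-- A ground protocol `P` is `F`-increasing: for each step `(N, s)` and each atom `α` of `s`,
`F(α, s) ⊒ ⌜α⌝ ⊓ F(α, N)`. -/
def Increasing {Atom L : Type} [CompleteLattice L] (lvl : Atom → L)
    (F : Atom → Set (Msg Atom) → L) (P : Set (Set (Msg Atom) × Msg Atom)) : Prop :=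
  ∀ st ∈ P, ∀ α ∈ (Prod.snd st).atoms, lvl α ⊓ F α st.1 ≤ F α {st.2}

/-- The intruder knowledge `Kᵢ = K₀ ∪ {s₁, …, sᵢ}` after the first `i` steps of a trace. -/
def knowAfter {Atom : Type} (K₀ : Set (Msg Atom))
    (tr : List (Set (Msg Atom) × Msg Atom)) (i : ℕ) : Set (Msg Atom) :=
  K₀ ∪ { m | ∃ st ∈ tr.take i, st.2 = m }

/-- A valid trace of protocol `P` from initial knowledge `K₀`: every step belongs to `P`
and each received message of step `i+1` is deducible from `Kᵢ`. -/
def ValidTrace {Atom : Type} (Key : Set Atom) (inv : Atom → Atom)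
    (P : Set (Set (Msg Atom) × Msg Atom)) (K₀ : Set (Msg Atom))
    (tr : List (Set (Msg Atom) × Msg Atom)) : Prop :=
  ∀ (i : ℕ) (hi : i < tr.length), tr.get ⟨i, hi⟩ ∈ P ∧
    ∀ m ∈ (tr.get ⟨i, hi⟩).1, Deduces Key inv (knowAfter K₀ tr i) m
open scoped Classical in
/-- Homomorphic application `mσ` of a substitution `σ` on the variables `Var`. -/
noncomputable def Msg.subst {Atom : Type} (Var : Set Atom) (σ : Atom → Msg Atom) :
    Msg Atom → Msg Atom
  | .atom a => if a ∈ Var then σ a else .atom a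
  | .pair m₁ m₂ => .pair (Msg.subst Var σ m₁) (Msg.subst Var σ m₂)
  | .enc m k => .enc (Msg.subst Var σ m) k

/-- A message is ground if no variable occurs in it. -/
def Ground {Atom : Type} (Var : Set Atom) (m : Msg Atom) : Prop :=
  ∀ a ∈ m.atoms, a ∉ Var

/-- A substitution assigns a ground message to every variable. -/
def IsSubst {Atom : Type} (Var : Set Atom) (σ : Atom → Msg Atom) : Prop :=
  ∀ X ∈ Var, Ground Var (σ X)

open scoped Classical in
/-- `derivE Var ε S m`: replace in `m` every variable not in `S` by the constant `ε`.
`derivE Var ε ∅ m` is the full derivative `∂m`, and `derivE Var ε {X} m` is `∂[X̄]m`. -/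
noncomputable def derivE {Atom : Type} (Var : Set Atom) (ε : Atom) (S : Set Atom) :
    Msg Atom → Msg Atom
  | .atom a => if a ∈ Var ∧ a ∉ S then .atom ε else .atom a
  | .pair m₁ m₂ => .pair (derivE Var ε S m₁) (derivE Var ε S m₂)
  | .enc m k => .enc (derivE Var ε S m) k

open scoped Classical in
/-- The derivative evaluation `G_F(α, m, σ)`: evaluate `F` on `∂m` if `α` occurs there,
on `∂[X̄]m` if `α` comes from the unique variable `X` of `m` with `σ(X) = atom α`,
and `⊤` otherwise. -/
noncomputable def derivEval {Atom L : Type} [CompleteLattice L]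
    (Var : Set Atom) (ε : Atom) (F : Atom → Set (Msg Atom) → L)
    (α : Atom) (m : Msg Atom) (σ : Atom → Msg Atom) : L :=
  if α ∈ (derivE Var ε ∅ m).atoms then F α {derivE Var ε ∅ m}
  else if h : ∃! X, X ∈ Var ∧ X ∈ m.atoms ∧ σ X = Msg.atom α then
    F h.choose {derivE Var ε {h.choose} m}
  else ⊤

/-- The witness function for the set of patterns `T`, on a ground message `t`:
the meet of the derivative evaluations over all sources `(m', σ')` of `t` in `T`. -/
noncomputable def witness {Atom L : Type} [CompleteLattice L]
    (Var : Set Atom) (ε : Atom) (F : Atom → Set (Msg Atom) → L)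
    (T : Set (Msg Atom)) (α : Atom) (t : Msg Atom) : L :=
  sInf { l | ∃ m' ∈ T, ∃ σ', IsSubst Var σ' ∧ Msg.subst Var σ' m' = t ∧
              l = derivEval Var ε F α m' σ' }

lemma subst_congr_aux {Atom : Type} (Var : Set Atom) (σ₁ σ₂ : Atom → Msg Atom)
    (m : Msg Atom) (h : ∀ a ∈ m.atoms, a ∈ Var → σ₁ a = σ₂ a) :
    Msg.subst Var σ₁ m = Msg.subst Var σ₂ m := by
  induction m with
  | atom a =>
    simp only [Msg.subst]
    split_ifs with hv
    · exact h a (by simp [Msg.atoms]) hv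
    · rfl
  | pair m₁ m₂ ih₁ ih₂ =>
    simp only [Msg.subst]
    rw [ih₁ (fun a ha hv => h a (Or.inl ha) hv), ih₂ (fun a ha hv => h a (Or.inr ha) hv)]
  | enc m k ih =>
    simp only [Msg.subst]
    rw [ih (fun a ha hv => h a (Or.inl ha) hv)]

open scoped Classical in
lemma exu_choose_congr {A L : Type} (P Q : A → Prop) (h : P = Q)
    (f : A → L) (d : L) :
    (if h : ExistsUnique P then f h.choose else d) =
    (if h : ExistsUnique Q then f h.choose else d) := by subst h; rfl

lemma derivEval_congr_aux {Atom L : Type} [CompleteLattice L]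
    (Var : Set Atom) (ε : Atom) (F : Atom → Set (Msg Atom) → L)
    (α : Atom) (m : Msg Atom) (σ₁ σ₂ : Atom → Msg Atom)
    (h : ∀ a ∈ m.atoms, a ∈ Var → σ₁ a = σ₂ a) :
    derivEval Var ε F α m σ₁ = derivEval Var ε F α m σ₂ := by
  have hfun : (fun X => X ∈ Var ∧ X ∈ m.atoms ∧ σ₁ X = Msg.atom α) =
      (fun X => X ∈ Var ∧ X ∈ m.atoms ∧ σ₂ X = Msg.atom α) := by
    funext X
    apply propext
    constructor
    · rintro ⟨h1, h2, h3⟩; exact ⟨h1, h2, by rw [← h X h2 h1]; exact h3⟩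
    · rintro ⟨h1, h2, h3⟩; exact ⟨h1, h2, by rw [h X h2 h1]; exact h3⟩
  unfold derivEval
  by_cases hα : α ∈ (derivE Var ε ∅ m).atoms
  · simp [hα]
  · simp only [hα, if_false]
    exact exu_choose_congr _ _ hfun (fun X => F X {derivE Var ε {X} m}) ⊤

/-- **Static condition implies increasing.** If the static lower-bound condition holds on
every step of a protocol with variables, then every ground instantiation of every step is
increasing for the witness function `W` (extended to sets of ground messages by meets). -/
theorem static_condition_implies_increasing
    {Atom L : Type} [Countable Atom] [CompleteLattice L]
    (Var Key : Set Atom) (hVK : Disjoint Var Key)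
    (ε : Atom) (hε : ε ∉ Var ∪ Key)
    (lvl : Atom → L)
    (F : Atom → Set (Msg Atom) → L)
    (p : Set (Set (Msg Atom) × Msg Atom)) (hpfin : ∀ st ∈ p, st.1.Finite)
    (T : Set (Msg Atom))
    (hT : ∀ m₁ ∈ T, ∀ m₂ ∈ T, m₁ ≠ m₂ → Disjoint (m₁.atoms ∩ Var) (m₂.atoms ∩ Var))
    (hcov : ∀ st ∈ p, st.2 ∈ T ∧ st.1 ⊆ T)
    (hstatic : ∀ st ∈ p, ∀ σ : Atom → Msg Atom, IsSubst Var σ → ∀ α : Atom,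
      lvl α ⊓ (⨅ m ∈ st.1, derivEval Var ε F α m σ) ≤
        sInf { l | ∃ m' ∈ T, ∃ σ', IsSubst Var σ' ∧
                Msg.subst Var σ' m' = Msg.subst Var σ' st.2 ∧
                l = derivEval Var ε F α m' σ' }) :
    ∀ st ∈ p, ∀ σ : Atom → Msg Atom, IsSubst Var σ → ∀ α : Atom,
      lvl α ⊓ (⨅ t ∈ Msg.subst Var σ '' st.1, witness Var ε F T α t) ≤
        witness Var ε F T α (Msg.subst Var σ st.2) := by
  classical
  intro st hst σ hσ α
  apply le_sInf
  rintro l ⟨m', hm'T, σ', hσ', heq, rfl⟩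
  set σ'' : Atom → Msg Atom := fun X => if X ∈ m'.atoms ∩ Var then σ' X else σ X
    with hσ''def
  have hσ''sub : IsSubst Var σ'' := by
    intro X hX
    simp only [hσ''def]
    split_ifs
    · exact hσ' X hX
    · exact hσ X hX
  have h1 : Msg.subst Var σ'' m' = Msg.subst Var σ' m' :=
    subst_congr_aux _ _ _ _ (fun a ha hv => by simp [hσ''def, ha, hv])
  have h2 : Msg.subst Var σ'' st.2 = Msg.subst Var σ st.2 := by
    by_cases hms : m' = st.2
    · subst hms; rw [h1, heq]
    · apply subst_congr_aux
      intro a ha hv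
      have hna : a ∉ m'.atoms ∩ Var := fun hmem =>
        Set.disjoint_left.mp (hT m' hm'T st.2 (hcov st hst).1 hms) hmem ⟨ha, hv⟩
      simp only [hσ''def]
      exact if_neg hna
  have hmem : derivEval Var ε F α m' σ'' ∈
      { l | ∃ m'' ∈ T, ∃ σ₂, IsSubst Var σ₂ ∧
          Msg.subst Var σ₂ m'' = Msg.subst Var σ₂ st.2 ∧
          l = derivEval Var ε F α m'' σ₂ } :=
    ⟨m', hm'T, σ'', hσ''sub, by rw [h1, heq, h2], rfl⟩
  have hGE : derivEval Var ε F α m' σ'' = derivEval Var ε F α m' σ' :=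
    derivEval_congr_aux _ _ _ _ _ _ _ (fun a ha hv => by simp [hσ''def, ha, hv])
  calc lvl α ⊓ (⨅ t ∈ Msg.subst Var σ '' st.1, witness Var ε F T α t)
      ≤ lvl α ⊓ ⨅ m ∈ st.1, derivEval Var ε F α m σ := by
        refine inf_le_inf_left _ (le_iInf₂ fun m hm => ?_)
        refine le_trans (iInf₂_le (Msg.subst Var σ m) ⟨m, hm, rfl⟩) ?_
        exact sInf_le ⟨m, (hcov st hst).2 hm, σ, hσ, rfl, rfl⟩
    _ ≤ sInf { l | ∃ m'' ∈ T, ∃ σ₂, IsSubst Var σ₂ ∧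
          Msg.subst Var σ₂ m'' = Msg.subst Var σ₂ st.2 ∧
          l = derivEval Var ε F α m'' σ₂ } := hstatic st hst σ hσ α
    _ ≤ derivEval Var ε F α m' σ'' := sInf_le hmem
    _ = derivEval Var ε F α m' σ' := hGE
end

section
/- Decision for secrecy: let F : Atom → Set Msg → L be any function, p a protocol with variables, and T a set of messages with pairwise disjoint variables among distinct elements such that for every step (R⁻, r⁺) ∈ p, r⁺ ∈ T and R⁻ ⊆ T; let W be the witness function for T, extended to a set M of ground messages by W(α, M) := ⊓_{t ∈ M} W(α, t), and assume that W, as a function of an atom and a set of ground messages, is safe (well-formed and full-invariant-by-intruder). If for every step (R⁻, r⁺) ∈ p, every substitution σ and every atom α we have ⊓ { G_F(α, m', σ') : m' ∈ T, σ' a substitution with m'σ' = r⁺σ' } ⊒ ⌜α⌝ ⊓ ⊓_{m ∈ R⁻} G_F(α, m, σ), then the ground instantiation P := { (R⁻σ, r⁺σ) : (R⁻, r⁺) ∈ p, σ a substitution } of p keeps its secret inputs: for every valid trace (N₁,s₁),…,(Nₙ,sₙ) of P from initial knowledge K₀ (a set of ground messages) and every atom α with W(α, K₀) ⊒ ⌜α⌝,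 ⌜α⌝ ≠ ⊥ and ¬(⌜K(I)⌝ ⊒ ⌜α⌝), we have ¬(Kₙ ⊢ atom α). -/
/-- The witness function extended to a set of ground messages, by taking meets. -/
noncomputable def witnessSet {Atom L : Type} [CompleteLattice L]
    (Var : Set Atom) (ε : Atom) (F : Atom → Set (Msg Atom) → L)
    (T : Set (Msg Atom)) (α : Atom) (M : Set (Msg Atom)) : L :=
  ⨅ t ∈ M, witness Var ε F T α t


section Aux

lemma subst_congr {Atom : Type} (Var : Set Atom) (σ τ : Atom → Msg Atom)
    (m : Msg Atom) (h : ∀ a ∈ m.atoms, a ∈ Var → σ a = τ a) :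
    Msg.subst Var σ m = Msg.subst Var τ m := by
  induction m with
  | atom a =>
      simp only [Msg.subst]
      split_ifs with ha
      · exact h a rfl ha
      · rfl
  | pair m₁ m₂ ih₁ ih₂ =>
      simp only [Msg.subst]
      rw [ih₁ (fun a ha hv => h a (Set.mem_union_left _ ha) hv),
          ih₂ (fun a ha hv => h a (Set.mem_union_right _ ha) hv)]
  | enc m k ih =>
      simp only [Msg.subst]
      rw [ih (fun a ha hv => h a (Set.mem_union_left _ ha) hv)]

lemma derivEval_congr {Atom L : Type} [CompleteLattice L]
    (Var : Set Atom) (ε : Atom) (F : Atom → Set (Msg Atom) → L)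
    (α : Atom) (m : Msg Atom) (σ τ : Atom → Msg Atom)
    (h : ∀ a ∈ m.atoms, a ∈ Var → σ a = τ a) :
    derivEval Var ε F α m σ = derivEval Var ε F α m τ := by
  classical
  have hPQ : ∀ X, (X ∈ Var ∧ X ∈ m.atoms ∧ σ X = Msg.atom α) ↔
      (X ∈ Var ∧ X ∈ m.atoms ∧ τ X = Msg.atom α) := by
    intro X
    constructor <;> rintro ⟨h1, h2, h3⟩ <;> refine ⟨h1, h2, ?_⟩
    · rw [← h X h2 h1]; exact h3
    · rw [h X h2 h1]; exact h3
  unfold derivEval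
  by_cases hα : α ∈ (derivE Var ε ∅ m).atoms
  · rw [if_pos hα, if_pos hα]
  · rw [if_neg hα, if_neg hα]
    by_cases hE : ∃! X, X ∈ Var ∧ X ∈ m.atoms ∧ σ X = Msg.atom α
    · have hE' : ∃! X, X ∈ Var ∧ X ∈ m.atoms ∧ τ X = Msg.atom α := by
        obtain ⟨X, hX, hu⟩ := hE
        exact ⟨X, (hPQ X).1 hX, fun y hy => hu y ((hPQ y).2 hy)⟩
      rw [dif_pos hE, dif_pos hE']
      have hc : hE.choose = hE'.choose :=
        hE'.choose_spec.2 hE.choose ((hPQ _).1 hE.choose_spec.1)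
      rw [hc]
    · have hE' : ¬ ∃! X, X ∈ Var ∧ X ∈ m.atoms ∧ τ X = Msg.atom α := by
        intro h'
        exact hE ⟨h'.choose, (hPQ _).2 h'.choose_spec.1,
          fun y hy => h'.choose_spec.2 y ((hPQ y).1 hy)⟩
      rw [dif_neg hE, dif_neg hE']

lemma knowAfter_zero {Atom : Type} (K₀ : Set (Msg Atom))
    (tr : List (Set (Msg Atom) × Msg Atom)) : knowAfter K₀ tr 0 = K₀ := by
  simp [knowAfter]

lemma knowAfter_succ {Atom : Type} (K₀ : Set (Msg Atom))
    (tr : List (Set (Msg Atom) × Msg Atom)) (i : ℕ) (hi : i < tr.length) :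
    knowAfter K₀ tr (i + 1) = knowAfter K₀ tr i ∪ {(tr.get ⟨i, hi⟩).2} := by
  ext m
  have h : tr[i]? = some (tr.get ⟨i, hi⟩) := by
    simp [List.getElem?_eq_getElem hi, List.get_eq_getElem]
  simp only [knowAfter, Set.mem_union, Set.mem_setOf_eq, Set.mem_singleton_iff,
    List.take_succ, h, Option.toList_some, List.mem_append, List.mem_singleton]
  constructor
  · rintro (hK | ⟨st, (hst | rfl), rfl⟩)
    · exact Or.inl (Or.inl hK)
    · exact Or.inl (Or.inr ⟨st, hst, rfl⟩)
    · exact Or.inr rfl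
  · rintro ((hK | ⟨st, hst, rfl⟩) | rfl)
    · exact Or.inl hK
    · exact Or.inr ⟨st, Or.inl hst, rfl⟩
    · exact Or.inr ⟨_, Or.inr rfl, rfl⟩

lemma witnessSet_singleton {Atom L : Type} [CompleteLattice L]
    (Var : Set Atom) (ε : Atom) (F : Atom → Set (Msg Atom) → L)
    (T : Set (Msg Atom)) (α : Atom) (t : Msg Atom) :
    witnessSet Var ε F T α {t} = witness Var ε F T α t := by
  simp [witnessSet]

end Aux

/-- **Decision for secrecy.** If the extended witness function `W` is safe and the static
lower-bound condition holds on every step of the protocol with variables `p`, then the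
ground instantiation of `p` keeps its secret inputs. -/
theorem decision_for_secrecy
    {Atom L : Type} [Countable Atom] [CompleteLattice L]
    (Var Key : Set Atom) (hVK : Disjoint Var Key)
    (inv : Atom → Atom) (hinv : ∀ k ∈ Key, inv k ∈ Key ∧ inv (inv k) = k)
    (ε : Atom) (hε : ε ∉ Var ∪ Key)
    (lvl : Atom → L) (KI : L)
    (F : Atom → Set (Msg Atom) → L)
    (p : Set (Set (Msg Atom) × Msg Atom)) (hpfin : ∀ st ∈ p, st.1.Finite)
    (T : Set (Msg Atom))
    (hT : ∀ m₁ ∈ T, ∀ m₂ ∈ T, m₁ ≠ m₂ → Disjoint (m₁.atoms ∩ Var) (m₂.atoms ∩ Var))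
    (hcov : ∀ st ∈ p, st.2 ∈ T ∧ st.1 ⊆ T)
    (hsafe : Safe Key inv lvl KI (witnessSet Var ε F T))
    (hstatic : ∀ st ∈ p, ∀ σ : Atom → Msg Atom, IsSubst Var σ → ∀ α : Atom,
      lvl α ⊓ (⨅ m ∈ st.1, derivEval Var ε F α m σ) ≤
        sInf { l | ∃ m' ∈ T, ∃ σ', IsSubst Var σ' ∧
                Msg.subst Var σ' m' = Msg.subst Var σ' st.2 ∧
                l = derivEval Var ε F α m' σ' })
    (K₀ : Set (Msg Atom)) (hK₀ : ∀ m ∈ K₀, Ground Var m)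
    (tr : List (Set (Msg Atom) × Msg Atom))
    (htr : ValidTrace Key inv
      { st | ∃ R r σ, (R, r) ∈ p ∧ IsSubst Var σ ∧
          st = (Msg.subst Var σ '' R, Msg.subst Var σ r) } K₀ tr)
    (α : Atom)
    (hα₀ : lvl α ≤ witnessSet Var ε F T α K₀) (hα₁ : lvl α ≠ ⊥) (hα₂ : ¬ lvl α ≤ KI) :
    ¬ Deduces Key inv (knowAfter K₀ tr tr.length) (Msg.atom α) := by
  classical
  obtain ⟨⟨hwf1, hwf2, hwf3⟩, hfi⟩ := hsafe
  have key : ∀ i ≤ tr.length, lvl α ≤ witnessSet Var ε F T α (knowAfter K₀ tr i) := by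
    intro i
    induction i with
    | zero => intro _; rw [knowAfter_zero]; exact hα₀
    | succ i ih =>
      intro hi1
      have hi : i < tr.length := hi1
      have ihi := ih (Nat.le_of_lt hi)
      obtain ⟨hmem, hded⟩ := htr i hi
      obtain ⟨R, r, σ, hRp, hσ, hst⟩ := hmem
      have hrT := (hcov (R, r) hRp).1
      have hRT := (hcov (R, r) hRp).2
      rw [knowAfter_succ K₀ tr i hi, hwf3, hst]
      refine le_inf ihi ?_
      have h1 : ∀ m ∈ R, witnessSet Var ε F T α (knowAfter K₀ tr i) ≤
          derivEval Var ε F α m σ := by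
        intro m hm
        have hd : Deduces Key inv (knowAfter K₀ tr i) (Msg.subst Var σ m) := by
          apply hded
          rw [hst]
          exact ⟨m, hm, rfl⟩
        have h2 : witnessSet Var ε F T α (knowAfter K₀ tr i) ≤
            witnessSet Var ε F T α {Msg.subst Var σ m} := by
          by_cases hmem2 : α ∈ (Msg.subst Var σ m).atoms
          · rcases hfi _ _ hd α hmem2 with h | h
            · exact h
            · exact absurd h hα₂
          · rw [hwf2 α {Msg.subst Var σ m} (by simpa [atomsOf] using hmem2)]
            exact le_top
        refine h2.trans ?_
        rw [witnessSet_singleton]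
        exact sInf_le ⟨m, hRT hm, σ, hσ, rfl, rfl⟩
      have h2 : lvl α ≤ lvl α ⊓ ⨅ m ∈ R, derivEval Var ε F α m σ :=
        le_inf le_rfl (le_iInf fun m => le_iInf fun hm => ihi.trans (h1 m hm))
      have h3 := hstatic (R, r) hRp σ hσ α
      have h4 : sInf { l | ∃ m' ∈ T, ∃ σ', IsSubst Var σ' ∧
              Msg.subst Var σ' m' = Msg.subst Var σ' r ∧
              l = derivEval Var ε F α m' σ' } ≤
          witness Var ε F T α (Msg.subst Var σ r) := by
        refine le_sInf ?_
        rintro l ⟨m', hm'T, σ', hσ', heq, rfl⟩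
        by_cases hmr : m' = r
        · exact sInf_le ⟨m', hm'T, σ', hσ', by rw [hmr], rfl⟩
        · have hdisj := hT m' hm'T r hrT hmr
          set σ'' : Atom → Msg Atom := fun X => if X ∈ r.atoms then σ X else σ' X
            with hσ''
          have hσ''sub : IsSubst Var σ'' := by
            intro X hX
            simp only [hσ'']
            split_ifs
            · exact hσ X hX
            · exact hσ' X hX
          have hagree : ∀ a ∈ m'.atoms, a ∈ Var → σ' a = σ'' a := by
            intro a ha hv
            have hnr : a ∉ r.atoms := fun hr =>
              Set.disjoint_left.mp hdisj ⟨ha, hv⟩ ⟨hr, hv⟩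
            simp [hσ'', hnr]
          have hagree2 : ∀ a ∈ r.atoms, a ∈ Var → σ a = σ'' a := by
            intro a ha hv
            simp [hσ'', ha]
          refine sInf_le ⟨m', hm'T, σ'', hσ''sub, ?_,
            derivEval_congr Var ε F α m' σ' σ'' hagree⟩
          rw [← subst_congr Var σ' σ'' m' hagree,
              ← subst_congr Var σ σ'' r hagree2, heq]
      calc lvl α ≤ _ := h2
        _ ≤ _ := h3
        _ ≤ witness Var ε F T α (Msg.subst Var σ r) := h4
        _ = witnessSet Var ε F T α {Msg.subst Var σ r} :=
            (witnessSet_singleton Var ε F T α _).symm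
  intro hd
  have hK := key tr.length le_rfl
  rcases hfi _ _ hd α rfl with h | h
  · have hb : lvl α ≤ ⊥ := (hK.trans h).trans_eq (hwf1 α)
    exact hα₁ (le_bot_iff.mp hb)
  · exact hα₂ h
end
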